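/- If τ : ℤ³ → F is nowhere zero and satisfies the lattice AKP equation A·τ̃τ̂̇ + B·τ̂τ̃̇ + C·τ̇τ̃̂ = 0 everywhere, then for each j ∈ {1,2,3,4} the scalar conservation law (A·P₁ⱼ + B·P₂ⱼ + C·P₃ⱼ)~ − (A·P₁ⱼ + B·P₂ⱼ + C·P₃ⱼ) + (A·Q₁ⱼ + B·Q₂ⱼ + C·Q₃ⱼ)^ − (…) + (A·R₁ⱼ + B·R₂ⱼ + C·R₃ⱼ)˙ − (…) = 0 holds, where P, Q, R are the explicit matrices from the matrix conservation law. -/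

import Mathlib

variable {F : Type*} [Field F]

/-- The matrix P of the matrix conservation law. -/
def matP (t : ℤ → ℤ → ℤ → F) (k l m : ℤ) : Matrix (Fin 3) (Fin 4) F :=
  !![ -(t (k+1) l m * t (k-1) (l+1) (m+1)) / (t k (l+1) m * t k l (m+1)), 0, 0,
      -(t k l m * t k (l+1) (m+1)) / (t k (l+1) m * t k l (m+1));
      -(t (k+1) l m * t (k-1) (l+1) m) / (t k (l+1) m * t k l m), 0,
      t k l (m+1) * t k (l+1) (m-1) / (t k (l+1) m * t k l m), 0;
      -(t (k+1) l m * t (k-1) l (m+1)) / (t k l (m+1) * t k l m),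
      t k (l+1) m * t k (l-1) (m+1) / (t k l (m+1) * t k l m), 0, 0]

/-- The matrix Q of the matrix conservation law. -/
def matQ (t : ℤ → ℤ → ℤ → F) (k l m : ℤ) : Matrix (Fin 3) (Fin 4) F :=
  !![ 0, -(t k (l+1) m * t (k+1) (l-1) m) / (t (k+1) l m * t k l m),
      t k l (m+1) * t (k+1) l (m-1) / (t (k+1) l m * t k l m), 0;
      0, -(t k (l+1) m * t (k+1) (l-1) (m+1)) / (t (k+1) l m * t k l (m+1)), 0,
      -(t k l m * t (k+1) l (m+1)) / (t (k+1) l m * t k l (m+1));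
      t (k+1) l m * t (k-1) l (m+1) / (t k l (m+1) * t k l m),
      -(t k (l+1) m * t k (l-1) (m+1)) / (t k l (m+1) * t k l m), 0, 0]

/-- The matrix R of the matrix conservation law. -/
def matR (t : ℤ → ℤ → ℤ → F) (k l m : ℤ) : Matrix (Fin 3) (Fin 4) F :=
  !![ 0, t k (l+1) m * t (k+1) (l-1) m / (t (k+1) l m * t k l m),
      -(t k l (m+1) * t (k+1) l (m-1)) / (t (k+1) l m * t k l m), 0;
      t (k+1) l m * t (k-1) (l+1) m / (t k (l+1) m * t k l m), 0,
      -(t k l (m+1) * t k (l+1) (m-1)) / (t k (l+1) m * t k l m), 0;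
      0, 0, -(t k l (m+1) * t (k+1) (l+1) (m-1)) / (t (k+1) l m * t k (l+1) m),
      -(t (k+1) (l+1) m * t k l m) / (t (k+1) l m * t k (l+1) m)]

/-- The vector V. -/
def vecV (t : ℤ → ℤ → ℤ → F) (k l m : ℤ) : Fin 3 → F :=
  ![t k (l+1) (m+1) * t (k+1) l m, t (k+1) l (m+1) * t k (l+1) m,
    t (k+1) (l+1) m * t k l (m+1)]

/-- The vector W of AKP conservation-law characteristics. -/
def vecW (t : ℤ → ℤ → ℤ → F) (k l m : ℤ) : Fin 4 → F :=
  ![t (k-1) (l+1) (m+1) / (t k (l+1) (m+1) * t k (l+1) m * t k l (m+1))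
      - t (k+2) l m / (t (k+1) l m * t (k+1) (l+1) m * t (k+1) l (m+1)),
    t (k+1) (l-1) (m+1) / (t (k+1) l (m+1) * t (k+1) l m * t k l (m+1))
      - t k (l+2) m / (t k (l+1) m * t k (l+1) (m+1) * t (k+1) (l+1) m),
    t (k+1) (l+1) (m-1) / (t (k+1) (l+1) m * t (k+1) l m * t k (l+1) m)
      - t k l (m+2) / (t k l (m+1) * t (k+1) l (m+1) * t k (l+1) (m+1)),
    t k l m / (t (k+1) l m * t k (l+1) m * t k l (m+1))
      - t (k+1) (l+1) (m+1) / (t (k+1) (l+1) m * t k (l+1) (m+1) * t (k+1) l (m+1))]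

/-- The matrix conservation law, entrywise: it is an identity of rational functions,
requiring only that `t` is nowhere zero. -/

private lemma add11 (a : ℤ) : a + 1 + 1 = a + 2 := by ring
private lemma add1sub1 (a : ℤ) : a + 1 - 1 = a := by ring

set_option maxHeartbeats 1000000 in
/-- The matrix conservation law, entrywise. -/
lemma matrix_conservation_law (t : ℤ → ℤ → ℤ → F) (ht : ∀ k l m : ℤ, t k l m ≠ 0)
    (i : Fin 3) (j : Fin 4) (k l m : ℤ) :
    matP t (k+1) l m i j - matP t k l m i j + matQ t k (l+1) m i j - matQ t k l m i j
      + matR t k l (m+1) i j - matR t k l m i j = vecV t k l m i * vecW t k l m j := by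
  fin_cases i <;> fin_cases j <;>
    · simp only [matP, matQ, matR, vecV, vecW, Matrix.cons_val', Matrix.cons_val_zero,
        Matrix.cons_val_one, Matrix.head_cons, Matrix.empty_val', Matrix.cons_val_fin_one,
        Matrix.of_apply, Matrix.cons_val_two, Matrix.cons_val_three, Matrix.tail_cons,
        Matrix.head_fin_const, Fin.isValue, Fin.zero_eta, Fin.mk_one, add11, add1sub1, Fin.reduceFinMk, Matrix.cons_val]
      field_simp [ht]
      first
      | (rw [div_eq_iff (by simp [ht])]; ring)
      | ring

theorem akp_four_conservation_laws (A B C : F) (t : ℤ → ℤ → ℤ → F)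
    (ht : ∀ k l m : ℤ, t k l m ≠ 0)
    (hAKP : ∀ k l m : ℤ,
      A * (t (k+1) l m * t k (l+1) (m+1)) + B * (t k (l+1) m * t (k+1) l (m+1))
        + C * (t k l (m+1) * t (k+1) (l+1) m) = 0) :
    ∀ (j : Fin 4) (k l m : ℤ),
      let S : ℤ → ℤ → ℤ → F := fun k l m =>
        A * matP t k l m 0 j + B * matP t k l m 1 j + C * matP t k l m 2 j
      let T : ℤ → ℤ → ℤ → F := fun k l m =>
        A * matQ t k l m 0 j + B * matQ t k l m 1 j + C * matQ t k l m 2 j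
      let U : ℤ → ℤ → ℤ → F := fun k l m =>
        A * matR t k l m 0 j + B * matR t k l m 1 j + C * matR t k l m 2 j
      S (k+1) l m - S k l m + T k (l+1) m - T k l m + U k l (m+1) - U k l m = 0 := by
  intro j k l m
  have h0 := matrix_conservation_law t ht 0 j k l m
  have h1 := matrix_conservation_law t ht 1 j k l m
  have h2 := matrix_conservation_law t ht 2 j k l m
  simp only [vecV, Matrix.cons_val_zero, Matrix.cons_val_one, Matrix.head_cons,
    Matrix.cons_val_two, Matrix.tail_cons] at h0 h1 h2
  simp only
  linear_combination A * h0 + B * h1 + C * h2 + vecW t k l m j * hAKP k l m
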